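/- Let A ∈ ℝ and let z₁,…,z₅ : ℝ → ℝ be differentiable functions satisfying the system (8): z₁' = 2z₄, z₂' = z₃, z₃' = −z₁ − 16A z₂ − 16 z₂², z₄' = −A z₁ + (1/3) z₅ − (8/3) z₁ z₂, z₅' = −6A z₄ + 2 z₁ z₃ − 8 z₂ z₄. Then F₁ = (1/2)A z₁ + (1/6) z₅ + 8A z₂² + (1/2) z₃² + (2/3) z₁ z₂ + (16/3) z₂³ is a constant of motion: d/dt F₁(z(t)) = 0. -/

import Mathlib

/-- F₁ is a constant of motion of the five-dimensional system (8). -/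
theorem F1_constant_of_motion (A : ℝ) (z₁ z₂ z₃ z₄ z₅ : ℝ → ℝ)
    (hz₁ : Differentiable ℝ z₁) (hz₂ : Differentiable ℝ z₂)
    (hz₃ : Differentiable ℝ z₃) (hz₄ : Differentiable ℝ z₄)
    (hz₅ : Differentiable ℝ z₅)
    (h₁ : ∀ t, deriv z₁ t = 2 * z₄ t)
    (h₂ : ∀ t, deriv z₂ t = z₃ t)
    (h₃ : ∀ t, deriv z₃ t = -z₁ t - 16 * A * z₂ t - 16 * (z₂ t)^2)
    (h₄ : ∀ t, deriv z₄ t = -A * z₁ t + (1/3) * z₅ t - (8/3) * z₁ t * z₂ t)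
    (h₅ : ∀ t, deriv z₅ t = -(6 * A) * z₄ t + 2 * z₁ t * z₃ t - 8 * z₂ t * z₄ t) :
    ∀ t, deriv (fun s =>
      (1/2) * A * z₁ s + (1/6) * z₅ s + 8 * A * (z₂ s)^2 + (1/2) * (z₃ s)^2
        + (2/3) * z₁ s * z₂ s + (16/3) * (z₂ s)^3) t = 0 := by
  intro t
  have d₁ : HasDerivAt z₁ (2 * z₄ t) t := h₁ t ▸ (hz₁ t).hasDerivAt
  have d₂ : HasDerivAt z₂ (z₃ t) t := h₂ t ▸ (hz₂ t).hasDerivAt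
  have d₃ : HasDerivAt z₃ (-z₁ t - 16 * A * z₂ t - 16 * (z₂ t)^2) t :=
    h₃ t ▸ (hz₃ t).hasDerivAt
  have d₄ : HasDerivAt z₄ (-A * z₁ t + (1/3) * z₅ t - (8/3) * z₁ t * z₂ t) t :=
    h₄ t ▸ (hz₄ t).hasDerivAt
  have d₅ : HasDerivAt z₅ (-(6 * A) * z₄ t + 2 * z₁ t * z₃ t - 8 * z₂ t * z₄ t) t :=
    h₅ t ▸ (hz₅ t).hasDerivAt
  have dF := ((((((d₁.const_mul ((1/2:ℝ)*A)).add (d₅.const_mul (1/6:ℝ))).add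
      ((d₂.pow 2).const_mul (8*A))).add ((d₃.pow 2).const_mul (1/2:ℝ))).add
      ((d₁.mul d₂).const_mul (2/3:ℝ))).add ((d₂.pow 3).const_mul (16/3:ℝ)))
  have key : (fun s =>
      (1/2) * A * z₁ s + (1/6) * z₅ s + 8 * A * (z₂ s)^2 + (1/2) * (z₃ s)^2
        + (2/3) * z₁ s * z₂ s + (16/3) * (z₂ s)^3)
      = (fun s => (1/2:ℝ)*A * z₁ s + (1/6:ℝ) * z₅ s + 8*A * (z₂ s)^2 + (1/2:ℝ) * (z₃ s)^2
        + (2/3:ℝ) * (z₁ s * z₂ s) + (16/3:ℝ) * (z₂ s)^3) := by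
    funext s; ring
  rw [key, (show HasDerivAt (fun s => (1/2:ℝ)*A * z₁ s + (1/6:ℝ) * z₅ s + 8*A * (z₂ s)^2 + (1/2:ℝ) * (z₃ s)^2
        + (2/3:ℝ) * (z₁ s * z₂ s) + (16/3:ℝ) * (z₂ s)^3) _ t from dF).deriv]; ring
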